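/- Let H be a real Hilbert space, L : H → H a self-adjoint bounded linear operator, and c > 0 a constant with c‖x‖ ≤ ‖Lx‖ for all x ∈ H. Let ψ : ℝ → H be continuously differentiable with compact support. Then c² ∫_ℝ ‖ψ(t)‖² dt ≤ ∫_ℝ ‖ψ'(t) + L(ψ(t))‖² dt. -/

import Mathlib

open MeasureTheory


private lemma hcs_norm_sq {H : Type*} [NormedAddCommGroup H] {f : ℝ → H}
    (hf : HasCompactSupport f) : HasCompactSupport fun t => ‖f t‖ ^ 2 := by
  apply hf.mono
  intro t ht
  simp only [Function.mem_support] at ht ⊢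
  intro h0
  exact ht (by simp [h0])

/-- A priori estimate on the perfect cylinder: if `L` is a self-adjoint bounded
operator on a real Hilbert space with spectral gap `c` (`c‖x‖ ≤ ‖Lx‖`), then for
every compactly supported `C¹` function `ψ : ℝ → H`,
`c² ∫ ‖ψ‖² ≤ ∫ ‖ψ' + Lψ‖²`. -/
theorem cylinder_apriori_estimate {H : Type*}
    [NormedAddCommGroup H] [InnerProductSpace ℝ H] [CompleteSpace H]
    (L : H →L[ℝ] H)
    (hsa : ∀ x y : H, (inner ℝ (L x) y : ℝ) = inner ℝ x (L y))
    (c : ℝ) (hc : 0 < c) (hgap : ∀ x : H, c * ‖x‖ ≤ ‖L x‖)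
    (ψ : ℝ → H) (hψ : ContDiff ℝ 1 ψ) (hsupp : HasCompactSupport ψ) :
    c ^ 2 * ∫ t : ℝ, ‖ψ t‖ ^ 2 ≤ ∫ t : ℝ, ‖deriv ψ t + L (ψ t)‖ ^ 2 := by
  have hψd : Differentiable ℝ ψ := hψ.differentiable one_ne_zero
  have hcd : Continuous (deriv ψ) := hψ.continuous_deriv le_rfl
  have hcψ : Continuous ψ := hψ.continuous
  have hsd : HasCompactSupport (deriv ψ) := hsupp.deriv
  have hcLψ : Continuous fun t => L (ψ t) := L.continuous.comp hcψ
  have hsLψ : HasCompactSupport fun t => L (ψ t) := hsupp.comp_left (by simp)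
  -- cross term integrand
  set g : ℝ → ℝ := fun t => inner ℝ (ψ t) (L (ψ t)) with hgdef
  have hg' : ∀ t, HasDerivAt g (2 * inner ℝ (deriv ψ t) (L (ψ t))) t := by
    intro t
    have h1 : HasDerivAt ψ (deriv ψ t) t := (hψd t).hasDerivAt
    have h2 : HasDerivAt (fun s => L (ψ s)) (L (deriv ψ t)) t :=
      L.hasFDerivAt.comp_hasDerivAt t h1
    have h3 := h1.inner ℝ h2
    have heq : (inner ℝ (ψ t) (L (deriv ψ t)) : ℝ) + inner ℝ (deriv ψ t) (L (ψ t))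
        = 2 * inner ℝ (deriv ψ t) (L (ψ t)) := by
      rw [← hsa (ψ t) (deriv ψ t), real_inner_comm]; ring
    rwa [heq] at h3
  -- integrability of pieces
  have hi1 : Integrable (fun t => ‖deriv ψ t‖ ^ 2) :=
    (hcd.norm.pow 2).integrable_of_hasCompactSupport (hcs_norm_sq hsd)
  have hi2 : Integrable (fun t => ‖L (ψ t)‖ ^ 2) :=
    (hcLψ.norm.pow 2).integrable_of_hasCompactSupport (hcs_norm_sq hsLψ)
  have hi3 : Integrable (fun t => ‖ψ t‖ ^ 2) :=
    (hcψ.norm.pow 2).integrable_of_hasCompactSupport (hcs_norm_sq hsupp)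
  have hig : Integrable g := by
    refine (continuous_inner.comp (hcψ.prodMk hcLψ)).integrable_of_hasCompactSupport ?_
    apply hsupp.mono
    intro t ht
    simp only [Function.mem_support, hgdef] at ht ⊢
    intro h0
    apply ht
    simp [h0]
  have hcross_supp : HasCompactSupport fun t => (2 * inner ℝ (deriv ψ t) (L (ψ t)) : ℝ) := by
    apply hsupp.mono
    intro t ht
    simp only [Function.mem_support] at ht ⊢
    intro h0
    apply ht
    simp [h0]
  have hig' : Integrable (fun t => 2 * (inner ℝ (deriv ψ t) (L (ψ t)) : ℝ)) := by
    refine ((continuous_const.mul (continuous_inner.comp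
      (hcd.prodMk hcLψ))).integrable_of_hasCompactSupport hcross_supp)
  have hcross0 : ∫ t : ℝ, 2 * (inner ℝ (deriv ψ t) (L (ψ t)) : ℝ) = 0 :=
    integral_eq_zero_of_hasDerivAt_of_integrable hg' hig' hig
  -- expand the square
  have hexp : ∫ t : ℝ, ‖deriv ψ t + L (ψ t)‖ ^ 2
      = (∫ t : ℝ, ‖deriv ψ t‖ ^ 2) + (∫ t : ℝ, ‖L (ψ t)‖ ^ 2) := by
    have : ∀ t : ℝ, ‖deriv ψ t + L (ψ t)‖ ^ 2
        = ‖deriv ψ t‖ ^ 2 + 2 * inner ℝ (deriv ψ t) (L (ψ t)) + ‖L (ψ t)‖ ^ 2 :=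
      fun t => norm_add_sq_real _ _
    have hA : Integrable (fun t => ‖deriv ψ t‖ ^ 2 + 2 * (inner ℝ (deriv ψ t) (L (ψ t)) : ℝ)) :=
      hi1.add hig'
    rw [integral_congr_ae (Filter.Eventually.of_forall this),
      integral_add hA hi2, integral_add hi1 hig', hcross0, add_zero]
  rw [hexp]
  have h1nn : 0 ≤ ∫ t : ℝ, ‖deriv ψ t‖ ^ 2 :=
    integral_nonneg fun t => by positivity
  have hgap2 : c ^ 2 * ∫ t : ℝ, ‖ψ t‖ ^ 2 ≤ ∫ t : ℝ, ‖L (ψ t)‖ ^ 2 := by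
    rw [← integral_const_mul]
    refine integral_mono (hi3.const_mul _) hi2 fun t => ?_
    have h := hgap (ψ t)
    have := mul_self_le_mul_self (by positivity) h
    calc c ^ 2 * ‖ψ t‖ ^ 2 = (c * ‖ψ t‖) * (c * ‖ψ t‖) := by ring
      _ ≤ ‖L (ψ t)‖ * ‖L (ψ t)‖ := this
      _ = ‖L (ψ t)‖ ^ 2 := (sq _).symm
  linarith
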